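/- If α ≥ 0 satisfies 2α ≤ 1, then for all y > 0, 1 - e^{-y(1+αy)} < y. -/

import Mathlib

theorem capture_prob_lt (α : ℝ) (hα : 0 ≤ α) (hα2 : 2 * α ≤ 1) :
    ∀ y : ℝ, 0 < y → 1 - Real.exp (-(y * (1 + α * y))) < y := by
  intro y hy
  rcases le_or_gt 1 y with h1 | h1
  · have := Real.exp_pos (-(y * (1 + α * y)))
    linarith
  · -- y < 1; it suffices to show (1 - y) * exp t < 1 where t = y*(1+α*y)
    set t := y * (1 + α * y) with hts
    have ht0 : 0 ≤ t := by rw [hts]; positivity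
    have htle : t ≤ y + y ^ 2 / 2 := by rw [hts]; nlinarith [sq_nonneg y]
    have hpos : 0 < Real.exp t := Real.exp_pos t
    have key : (1 - y) * Real.exp t < 1 := by
      rcases le_or_gt y (7/10) with h7 | h7
      · -- small y: Taylor bound of degree 4 on [0,1]
        have ht1 : t ≤ 1 := by nlinarith
        have hub := Real.exp_bound' ht0 ht1 (n := 4) (by norm_num)
        simp only [Finset.sum_range_succ, Finset.sum_range_zero] at hub
        norm_num [Nat.factorial] at hub
        nlinarith [sq_nonneg t, sq_nonneg y, sq_nonneg (t - y), sq_nonneg (t*y),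
          mul_pos hy hy, sq_nonneg (t + y), sq_nonneg (t*t)]
      · -- large y: exp t ≤ exp (3y/2) and exp (3/2) < 9/2
        have ht32 : t ≤ 3/2 * y := by rw [hts]; nlinarith [sq_nonneg y]
        have h1' : Real.exp t ≤ Real.exp (3/2 * y) := Real.exp_le_exp.mpr ht32
        have he1 : Real.exp 1 < 2.7182818286 := Real.exp_one_lt_d9
        have he1p : (0:ℝ) < Real.exp 1 := Real.exp_pos 1
        have he3 : Real.exp 3 < 81/4 := by
          have h3e : Real.exp 3 = Real.exp 1 * Real.exp 1 * Real.exp 1 := by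
            rw [← Real.exp_add, ← Real.exp_add]; norm_num
          rw [h3e]; nlinarith
        have he32 : Real.exp (3/2) < 9/2 := by
          have hsq : Real.exp (3/2) * Real.exp (3/2) = Real.exp 3 := by
            rw [← Real.exp_add]; norm_num
          nlinarith [Real.exp_pos (3/2 : ℝ)]
        have hden : 1 + 3/2 * (1 - y) ≤ Real.exp (3/2 * (1 - y)) := by
          have := Real.add_one_le_exp (3/2 * (1 - y))
          linarith
        have hdenpos : (0:ℝ) < 1 + 3/2 * (1 - y) := by linarith
        have hsplit : Real.exp (3/2 * y) = Real.exp (3/2) / Real.exp (3/2 * (1 - y)) := by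
          rw [eq_div_iff (Real.exp_ne_zero _), ← Real.exp_add]
          ring_nf
        have hlt : Real.exp (3/2 * y) < 9/2 / (1 + 3/2 * (1 - y)) := by
          rw [hsplit]
          exact div_lt_div₀ he32 hden (by linarith) hdenpos
        have hy1 : 0 < 1 - y := by linarith
        calc (1 - y) * Real.exp t ≤ (1 - y) * Real.exp (3/2 * y) := by
              exact mul_le_mul_of_nonneg_left h1' (le_of_lt hy1)
          _ < (1 - y) * (9/2 / (1 + 3/2 * (1 - y))) := by
              exact mul_lt_mul_of_pos_left hlt hy1
          _ < 1 := by
              rw [mul_div_assoc', div_lt_one hdenpos]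
              nlinarith
    have : 1 - y < 1 / Real.exp t := (lt_div_iff₀ hpos).mpr (by linarith [key])
    rw [Real.exp_neg, ← one_div]
    linarith
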